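/- Let G be a minimal nonperfectly divisible fork-free graph, v ∈ V(G), and C = v_1v_2…v_nv_1 an odd hole contained in G[M(v)] (n ≥ 5 odd, indices modulo n). Then for every z ∈ Z(C) there exists i ∈ {1, 2, …, n} such that z is adjacent to both v_i and v_{i+1}. -/
import Mathlib


open SimpleGraph

/-- `G` contains an induced copy of `H`. -/
def HasInducedCopy {V W : Type*} (G : SimpleGraph V) (H : SimpleGraph W) : Prop :=
  ∃ f : W ↪ V, ∀ a b : W, G.Adj (f a) (f b) ↔ H.Adj a b

/-- The fork: the claw `K_{1,3}` with one edge subdivided once. -/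
def fork : SimpleGraph (Fin 5) :=
  SimpleGraph.fromEdgeSet {s(0, 1), s(0, 2), s(0, 3), s(3, 4)}

/-- The claw `K_{1,3}`. -/
def claw : SimpleGraph (Fin 4) :=
  SimpleGraph.fromEdgeSet {s(0, 1), s(0, 2), s(0, 3)}

/-- The path on 7 vertices. -/
def P7 : SimpleGraph (Fin 7) := SimpleGraph.pathGraph 7

/-- The disjoint union of a path on 6 vertices and a single vertex. -/
def P6K1 : SimpleGraph (Fin 7) :=
  SimpleGraph.fromEdgeSet {s(0, 1), s(1, 2), s(2, 3), s(3, 4), s(4, 5)}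

/-- A graph is perfect if every induced subgraph has chromatic number
equal to clique number. -/
def IsPerfect {V : Type*} (G : SimpleGraph V) : Prop :=
  ∀ s : Set V, (G.induce s).chromaticNumber = ((G.induce s).cliqueNum : ℕ∞)

/-- A graph is perfectly divisible if the vertex set of every (nonempty) induced
subgraph `H` can be partitioned into `A` and `B` with `H[A]` perfect and
`ω(H[B]) < ω(H)`. -/
def PerfectlyDivisible {V : Type*} (G : SimpleGraph V) : Prop :=
  ∀ s : Set V, s.Nonempty → ∃ A B : Set V, A ∪ B = s ∧ A ∩ B = ∅ ∧
    IsPerfect (G.induce A) ∧ (G.induce B).cliqueNum < (G.induce s).cliqueNum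

/-- A graph is minimal nonperfectly divisible if it is not perfectly divisible but
every proper induced subgraph is perfectly divisible. -/
def MinimalNPD {V : Type*} (G : SimpleGraph V) : Prop :=
  ¬ PerfectlyDivisible G ∧ ∀ s : Set V, s ≠ Set.univ → PerfectlyDivisible (G.induce s)

/-- The open neighborhood of a set `S`: all vertices outside `S` with a neighbor in `S`. -/
def NSet {V : Type*} (G : SimpleGraph V) (S : Set V) : Set V :=
  {v | v ∉ S ∧ ∃ x ∈ S, G.Adj x v}

/-- `M(S)`: the vertices outside `S ∪ N(S)`. -/
def MSet {V : Type*} (G : SimpleGraph V) (S : Set V) : Set V :=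
  {v | v ∉ S ∧ v ∉ NSet G S}

/-- `M(v)`: the set of vertices distinct from `v` and nonadjacent to `v`. -/
def Mv {V : Type*} (G : SimpleGraph V) (v : V) : Set V :=
  {u | u ≠ v ∧ ¬ G.Adj v u}

/-- `f : ZMod n → V` describes a hole (an induced cycle of length at least 4) of `G`. -/
def IsHole {V : Type*} (G : SimpleGraph V) (n : ℕ) (f : ZMod n → V) : Prop :=
  4 ≤ n ∧ Function.Injective f ∧
    ∀ i j : ZMod n, G.Adj (f i) (f j) ↔ (j = i + 1 ∨ i = j + 1)

/-- `U(C)`: the balloon centers of the hole `C` given by `f`. -/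
def USet {V : Type*} (G : SimpleGraph V) (n : ℕ) (f : ZMod n → V) : Set V :=
  {u | u ∈ NSet G (MSet G (Set.range f)) ∧
    ∃ i : ZMod n, G.neighborSet u ∩ Set.range f = {f i, f (i + 1)}}

/-- `U_i(C)`: the balloon centers of `C` attached at `v_i v_{i+1}`. -/
def UiSet {V : Type*} (G : SimpleGraph V) (n : ℕ) (f : ZMod n → V) (i : ZMod n) : Set V :=
  {u | u ∈ NSet G (MSet G (Set.range f)) ∧
    G.neighborSet u ∩ Set.range f = {f i, f (i + 1)}}

/-- `U'(C)`: the parachute centers of `C`. -/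
def U'Set {V : Type*} (G : SimpleGraph V) (n : ℕ) (f : ZMod n → V) : Set V :=
  {u | u ∈ NSet G (MSet G (Set.range f)) ∧ ∀ i : ZMod n, G.Adj u (f i)}

/-- `Z(C)`: vertices of `N(V(C)) \ N(M(C))` not complete to `V(C)`. -/
def ZSet {V : Type*} (G : SimpleGraph V) (n : ℕ) (f : ZMod n → V) : Set V :=
  {z | z ∈ NSet G (Set.range f) ∧ z ∉ NSet G (MSet G (Set.range f)) ∧
    ¬ ∀ i : ZMod n, G.Adj z (f i)}

/-- `Z'(C) = N(V(C)) \ (N(M(C)) ∪ Z(C))`. -/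
def Z'Set {V : Type*} (G : SimpleGraph V) (n : ℕ) (f : ZMod n → V) : Set V :=
  NSet G (Set.range f) \ (NSet G (MSet G (Set.range f)) ∪ ZSet G n f)

/-- `Y(C) = N_{M(C)}(U(C))`. -/
def YSet {V : Type*} (G : SimpleGraph V) (n : ℕ) (f : ZMod n → V) : Set V :=
  {y | y ∈ MSet G (Set.range f) ∧ ∃ u ∈ USet G n f, G.Adj u y}

/-- `x` and `y` lie in a common connected component of `G[S]`. -/
def SameComp {V : Type*} (G : SimpleGraph V) (S : Set V) (x y : V) : Prop :=
  ∃ (hx : x ∈ S) (hy : y ∈ S), (G.induce S).Reachable ⟨x, hx⟩ ⟨y, hy⟩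

/-- `Y'(C)`: the union of the components of `G[M(C)]` meeting `Y(C)`. -/
def Y'Set {V : Type*} (G : SimpleGraph V) (n : ℕ) (f : ZMod n → V) : Set V :=
  {x | ∃ y ∈ YSet G n f, SameComp G (MSet G (Set.range f)) x y}

theorem stmt15 {V : Type*} [Fintype V] (G : SimpleGraph V)
    (hfork : ¬ HasInducedCopy G fork) (hmin : MinimalNPD G)
    (v : V) (n : ℕ) (f : ZMod n → V) (hC : IsHole G n f) (hodd : Odd n)
    (hn : 5 ≤ n) (hMv : Set.range f ⊆ Mv G v) :
    ∀ z ∈ ZSet G n f, ∃ i : ZMod n, G.Adj z (f i) ∧ G.Adj z (f (i + 1)) := by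
  intro z hz
  by_contra hcon
  push_neg at hcon
  obtain ⟨hz1, hz2, hnotall⟩ := hz
  obtain ⟨hznr, x, hxr, hxz⟩ := hz1
  obtain ⟨_, hinj, hadj⟩ := hC
  have hnz : NeZero n := ⟨by omega⟩
  have hcasteq : ∀ a b : ℕ, a < n → b < n → ((a : ZMod n) = (b : ZMod n)) → a = b := by
    intro a b ha hb h
    rw [← ZMod.val_cast_of_lt ha, ← ZMod.val_cast_of_lt hb, h]
  -- key claim : some i with z ~ f i and z ≁ f (i+2)
  have hkey : ∃ i : ZMod n, G.Adj z (f i) ∧ ¬ G.Adj z (f (i + 2)) := by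
    by_contra h
    push_neg at h
    obtain ⟨i0, rfl⟩ := hxr
    have hi0 : G.Adj z (f i0) := hxz.symm
    have hall : ∀ k : ℕ, G.Adj z (f (i0 + 2 * (k : ZMod n))) := by
      intro k
      induction k with
      | zero => simpa using hi0
      | succ k ih =>
        have h2 : i0 + 2 * ((k + 1 : ℕ) : ZMod n) = i0 + 2 * (k : ℕ) + 2 := by
          push_cast; ring
        rw [h2]
        exact h _ ih
    apply hnotall
    intro j
    have hu : IsUnit (2 : ZMod n) := by
      have h2 : ((2 : ℕ) : ZMod n) = (2 : ZMod n) := by norm_cast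
      rw [← h2, ZMod.isUnit_iff_coprime, Nat.Prime.coprime_iff_not_dvd Nat.prime_two]
      intro hdvd
      rw [Nat.odd_iff] at hodd
      omega
    set t : ZMod n := (2 : ZMod n)⁻¹ * (j - i0) with ht
    have h2t : 2 * t = j - i0 := by
      rw [ht, ← mul_assoc, ZMod.mul_inv_of_unit _ hu, one_mul]
    have hfin := hall t.val
    rw [ZMod.natCast_val, ZMod.cast_id, h2t] at hfin
    have hjj : i0 + (j - i0) = j := by ring
    rwa [hjj] at hfin
  obtain ⟨i, hzi, hzi2⟩ := hkey
  have hzi1 : ¬ G.Adj z (f (i + 1)) := hcon i hzi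
  have hzim : ¬ G.Adj z (f (i - 1)) := by
    intro h'
    have h1 : i - 1 + 1 = i := by ring
    exact (h1 ▸ hcon (i - 1) h') hzi
  set j : ZMod n := i - 1 with hj
  set w : ℕ → V := fun a => f (j + (a : ZMod n)) with hw
  have hadjn : ∀ a b : ℕ, a + 1 < n → b + 1 < n →
      (G.Adj (w a) (w b) ↔ (b = a + 1 ∨ a = b + 1)) := by
    intro a b ha hb
    rw [hw]
    simp only []
    rw [hadj]
    constructor
    · rintro (h | h)
      · left
        apply hcasteq b (a + 1) (by omega) (by omega)
        have h2 : j + (b : ZMod n) = j + ((a + 1 : ℕ) : ZMod n) := by push_cast; rw [h]; push_cast; ring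
        exact add_left_cancel h2
      · right
        apply hcasteq a (b + 1) (by omega) (by omega)
        have h2 : j + (a : ZMod n) = j + ((b + 1 : ℕ) : ZMod n) := by push_cast; rw [h]; push_cast; ring
        exact add_left_cancel h2
    · rintro (rfl | rfl)
      · left; push_cast; ring
      · right; push_cast; ring
  have hfne : ∀ a b : ℕ, a < n → b < n → a ≠ b → w a ≠ w b := by
    intro a b ha hb hab h
    exact hab (hcasteq a b ha hb (add_left_cancel (hinj h)))
  have hzne : ∀ a : ℕ, z ≠ w a := fun a h => hznr ⟨_, h.symm⟩
  have e0 : w 0 = f (i - 1) := by rw [hw]; simp [hj]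
  have e1 : w 1 = f i := by rw [hw]; simp only []; congr 1; rw [hj]; push_cast; ring
  have e2 : w 2 = f (i + 1) := by rw [hw]; simp only []; congr 1; rw [hj]; push_cast; ring
  have e3 : w 3 = f (i + 2) := by rw [hw]; simp only []; congr 1; rw [hj]; push_cast; ring
  -- adjacency facts
  have A01 : G.Adj (w 1) z := (e1 ▸ hzi).symm
  have A02 : G.Adj (w 1) (w 0) := (hadjn 1 0 (by omega) (by omega)).mpr (Or.inr rfl)
  have A03 : G.Adj (w 1) (w 2) := (hadjn 1 2 (by omega) (by omega)).mpr (Or.inl rfl)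
  have A34 : G.Adj (w 2) (w 3) := (hadjn 2 3 (by omega) (by omega)).mpr (Or.inl rfl)
  have N0 : ¬ G.Adj z (w 0) := e0 ▸ hzim
  have N2 : ¬ G.Adj z (w 2) := e2 ▸ hzi1
  have N3 : ¬ G.Adj z (w 3) := e3 ▸ hzi2
  have N02 : ¬ G.Adj (w 0) (w 2) := fun h => by
    rcases (hadjn 0 2 (by omega) (by omega)).mp h with h' | h' <;> omega
  have N03 : ¬ G.Adj (w 0) (w 3) := fun h => by
    rcases (hadjn 0 3 (by omega) (by omega)).mp h with h' | h' <;> omega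
  have N13 : ¬ G.Adj (w 1) (w 3) := fun h => by
    rcases (hadjn 1 3 (by omega) (by omega)).mp h with h' | h' <;> omega
  -- the fork embedding
  set g : Fin 5 → V := ![w 1, z, w 0, w 2, w 3] with hg
  have hginj : Function.Injective g := by
    intro a b hab
    fin_cases a <;> fin_cases b <;>
      simp only [hg, Matrix.cons_val_zero, Matrix.cons_val_one, Matrix.head_cons,
        Matrix.cons_val_two, Matrix.tail_cons, Matrix.cons_val_three,
        Matrix.cons_val_four, Matrix.cons_val_fin_one, Fin.mk_one] at hab <;>
      first
        | rfl
        | exact absurd hab (hfne _ _ (by omega) (by omega) (by omega))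
        | exact absurd hab.symm (hzne _)
        | exact absurd hab (hzne _)
  apply hfork
  refine ⟨⟨g, hginj⟩, ?_⟩
  intro a b
  fin_cases a <;> fin_cases b <;>
    simp only [Function.Embedding.coeFn_mk, hg, Matrix.cons_val_zero, Matrix.cons_val_one,
      Matrix.head_cons, Matrix.cons_val_two, Matrix.tail_cons, Matrix.cons_val_three,
      Matrix.cons_val_four] <;>
    simp only [fork, fromEdgeSet_adj, Set.mem_insert_iff, Set.mem_singleton_iff] <;>
    first
      | (apply iff_of_true ?_ (by decide)) <;> first
          | exact A01 | exact A01.symm | exact A02 | exact A02.symm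
          | exact A03 | exact A03.symm | exact A34 | exact A34.symm
      | (apply iff_of_false ?_ (by decide)) <;> first
          | exact G.irrefl
          | exact N0 | exact fun h => N0 h.symm
          | exact N2 | exact fun h => N2 h.symm
          | exact N3 | exact fun h => N3 h.symm
          | exact N02 | exact fun h => N02 h.symm
          | exact N03 | exact fun h => N03 h.symm
          | exact N13 | exact fun h => N13 h.symm
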